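/- Let r < e^{-2} and K_t(s) = (t−s)₊^{-1/2}|ln(t−s)₊|^{-1}. Then for all 0 ≤ t ≤ t+u ≤ r with u > 0, the L₂[0,r]-modulus of continuity satisfies ‖K_{t+u} − K_t‖₂ ≤ 2 |ln u|^{-1/2}, i.e. ∫₀ʳ (K_{t+u}(s) − K_t(s))² ds ≤ 4 |ln u|^{-1}. -/

import Mathlib

open scoped ENNReal
open MeasureTheory

/-- The critical Volterra kernel `K_t(s) = (t-s)₊^{-1/2} |ln (t-s)₊|^{-1}`,
interpreted as `0` for `s ≥ t`. -/
noncomputable def Ker (t s : ℝ) : ℝ :=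
  if s < t then (t - s) ^ (-(1 : ℝ) / 2) * |Real.log (t - s)|⁻¹ else 0

section AuxLemmas
open Set

noncomputable def kg (v : ℝ) : ℝ := (v * Real.log v ^ 2)⁻¹
noncomputable def kG (v : ℝ) : ℝ := -(Real.log v)⁻¹

lemma kg_nonneg {v : ℝ} (h0 : 0 ≤ v) : 0 ≤ kg v :=
  inv_nonneg.mpr (mul_nonneg h0 (sq_nonneg _))

lemma kG_nonneg {v : ℝ} (h0 : 0 < v) (h1 : v < 1) : 0 ≤ kG v := by
  have := Real.log_neg h0 h1
  simp only [kG, neg_nonneg]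
  exact inv_nonpos.mpr this.le

lemma kG_mono {a b : ℝ} (ha : 0 < a) (hab : a ≤ b) (hb : b < 1) : kG a ≤ kG b := by
  have hlb : 0 < -Real.log b := by
    simpa using neg_pos.mpr (Real.log_neg (lt_of_lt_of_le ha hab) hb)
  have h2 : -Real.log b ≤ -Real.log a := by
    simpa using Real.log_le_log ha hab
  simp only [kG, ← inv_neg]
  gcongr

lemma hasDerivAt_kG {x : ℝ} (hx : 0 < x) (hx1 : x < 1) : HasDerivAt kG (kg x) x := by
  have hl : Real.log x ≠ 0 := ne_of_lt (Real.log_neg hx hx1)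
  have h1 := ((Real.hasDerivAt_log hx.ne').inv hl).neg
  have e : kg x = -(-x⁻¹ / Real.log x ^ 2) := by
    simp only [kg]; field_simp
  rw [e]; exact h1

lemma hasDerivAt_kg {x : ℝ} (hx : 0 < x) (hx1 : x < 1) :
    HasDerivAt kg (-(Real.log x ^ 2 + 2 * Real.log x) / (x * Real.log x ^ 2) ^ 2) x := by
  have hl : Real.log x ≠ 0 := ne_of_lt (Real.log_neg hx hx1)
  have hden : x * Real.log x ^ 2 ≠ 0 := by positivity
  have hh : HasDerivAt (fun v => v * Real.log v ^ 2)
      (1 * Real.log x ^ 2 + x * (2 * Real.log x ^ 1 * x⁻¹)) x :=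
    (hasDerivAt_id x).mul ((Real.hasDerivAt_log hx.ne').pow 2)
  have := hh.inv hden
  have e : -(Real.log x ^ 2 + 2 * Real.log x) / (x * Real.log x ^ 2) ^ 2 =
      -(1 * Real.log x ^ 2 + x * (2 * Real.log x ^ 1 * x⁻¹)) / (x * Real.log x ^ 2) ^ 2 := by
    field_simp
  rw [e]; exact this

lemma continuousAt_kg {x : ℝ} (hx : 0 < x) (hx1 : x < 1) : ContinuousAt kg x :=
  (hasDerivAt_kg hx hx1).continuousAt

lemma kg_anti {x y : ℝ} (hx : 0 < x) (hxy : x ≤ y) (hy : y < Real.exp (-2)) :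
    kg y ≤ kg x := by
  rcases eq_or_lt_of_le hxy with rfl | hlt
  · exact le_rfl
  have he1 : Real.exp (-2 : ℝ) < 1 := by
    rw [Real.exp_lt_one_iff]; norm_num
  have hanti : StrictAntiOn kg (Ioo 0 (Real.exp (-2))) := by
    apply strictAntiOn_of_deriv_neg (convex_Ioo _ _)
    · intro z hz
      exact (continuousAt_kg hz.1 (hz.2.trans he1)).continuousWithinAt
    · intro z hz
      rw [interior_Ioo] at hz
      have hz1 : z < 1 := hz.2.trans he1
      have hd := hasDerivAt_kg hz.1 hz1
      rw [hd.deriv]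
      have hlz : Real.log z < -2 := by
        calc Real.log z < Real.log (Real.exp (-2)) :=
          Real.log_lt_log hz.1 hz.2
        _ = -2 := Real.log_exp _
      have hnum : 0 < Real.log z ^ 2 + 2 * Real.log z := by nlinarith
      have hlz0 : Real.log z ≠ 0 := by nlinarith
      have hden : 0 < (z * Real.log z ^ 2) ^ 2 := by
        have h2 : 0 < Real.log z ^ 2 := by nlinarith
        exact pow_pos (mul_pos hz.1 h2) 2
      exact div_neg_of_neg_of_pos (neg_neg_iff_pos.mpr hnum) hden
  exact le_of_lt (hanti ⟨hx, hlt.trans hy⟩ ⟨hx.trans hlt, hy⟩ hlt)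

lemma continuousOn_kg {a b : ℝ} (ha : 0 < a) (hb : b < 1) : ContinuousOn kg (Icc a b) :=
  fun x hx => (continuousAt_kg (lt_of_lt_of_le ha hx.1) (lt_of_le_of_lt hx.2 hb)).continuousWithinAt

lemma integral_kg {a b : ℝ} (ha : 0 < a) (hab : a ≤ b) (hb : b < 1) :
    ∫ v in a..b, kg v = kG b - kG a := by
  apply intervalIntegral.integral_eq_sub_of_hasDerivAt
  · intro x hx
    rw [uIcc_of_le hab] at hx
    exact hasDerivAt_kG (lt_of_lt_of_le ha hx.1) (lt_of_le_of_lt hx.2 hb)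
  · apply ContinuousOn.intervalIntegrable
    rw [uIcc_of_le hab]
    exact continuousOn_kg ha hb

lemma lintegral_kg {a b : ℝ} (ha : 0 < a) (hab : a ≤ b) (hb : b < 1) :
    ∫⁻ v in Ioc a b, ENNReal.ofReal (kg v) = ENNReal.ofReal (kG b - kG a) := by
  have hint : IntegrableOn kg (Ioc a b) :=
    ((continuousOn_kg ha hb).integrableOn_Icc).mono_set Ioc_subset_Icc_self
  rw [← ofReal_integral_eq_lintegral_ofReal hint]
  · rw [← intervalIntegral.integral_of_le hab, integral_kg ha hab hb]
  · filter_upwards [ae_restrict_mem measurableSet_Ioc] with x hx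
    exact kg_nonneg (lt_of_lt_of_le ha hx.1.le).le

lemma lintegral_kg_zero {b : ℝ} (hb0 : 0 < b) (hb1 : b < 1) :
    ∫⁻ v in Ioc 0 b, ENNReal.ofReal (kg v) ≤ ENNReal.ofReal (kG b) := by
  have hU : Ioc (0:ℝ) b = ⋃ n : ℕ, Ioc (b / (n + 1)) b := by
    ext x
    simp only [mem_Ioc, mem_iUnion]
    constructor
    · rintro ⟨hx0, hxb⟩
      obtain ⟨n, hn⟩ := exists_nat_gt (b / x)
      refine ⟨n, ⟨?_, hxb⟩⟩
      rw [div_lt_iff₀ (by positivity)]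
      rw [div_lt_iff₀ hx0] at hn
      nlinarith
    · rintro ⟨n, hn, hxb⟩
      exact ⟨lt_of_le_of_lt (by positivity) hn, hxb⟩
  have hdir : Directed (· ⊆ ·) (fun n : ℕ => Ioc (b / (n + 1)) b) := by
    apply Monotone.directed_le
    intro m n hmn
    apply Ioc_subset_Ioc_left
    apply div_le_div_of_nonneg_left hb0.le (by positivity)
    exact_mod_cast Nat.succ_le_succ hmn
  rw [hU, setLIntegral_iUnion_of_directed _ hdir]
  apply iSup_le
  intro n
  have ha : 0 < b / (n + 1) := by positivity
  rcases le_or_gt (b / (n + 1)) b with hab | hab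
  · rw [lintegral_kg ha hab hb1]
    apply ENNReal.ofReal_le_ofReal
    have := kG_nonneg ha (lt_of_le_of_lt hab hb1)
    linarith
  · rw [Ioc_eq_empty (by exact fun h => absurd h (not_lt.mpr hab.le))]
    simp [kG_nonneg hb0 hb1]

lemma kG_two {u : ℝ} (hu : 0 < u) (hlu : Real.log u < -2) : kG (2 * u) ≤ 2 * kG u := by
  have hlog2 : Real.log 2 < 1 := lt_trans Real.log_two_lt_d9 (by norm_num)
  have hlog2' : 0 < Real.log 2 := Real.log_pos (by norm_num)
  have h2u : Real.log (2 * u) = Real.log 2 + Real.log u :=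
    Real.log_mul two_ne_zero hu.ne'
  simp only [kG, h2u, ← inv_neg]
  have h1 : 2 * (- Real.log u)⁻¹ = ((- Real.log u) / 2)⁻¹ := by
    rw [inv_div]
    ring
  rw [h1]
  have hA : 0 < -Real.log u / 2 := by linarith
  have hB : -Real.log u / 2 ≤ -(Real.log 2 + Real.log u) := by linarith
  gcongr


lemma Ker_nonneg (t s : ℝ) : 0 ≤ Ker t s := by
  unfold Ker
  split
  · have h : (0:ℝ) ≤ (t - s) ^ (-(1:ℝ)/2) := Real.rpow_nonneg (by linarith) _
    positivity
  · exact le_refl 0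

lemma Ker_sq {t s : ℝ} (h : s < t) : Ker t s ^ 2 = kg (t - s) := by
  have hx : 0 < t - s := sub_pos.mpr h
  rw [Ker, if_pos h, mul_pow, ← Real.rpow_natCast ((t - s) ^ (-(1:ℝ)/2)) 2,
    ← Real.rpow_mul hx.le]
  norm_num [Real.rpow_neg_one]
  rw [kg, mul_inv]

end AuxLemmas

/-- Modulus of continuity of the critical kernel in `L₂[0,r]`, `r < e^{-2}`:
for `0 ≤ t ≤ t + u ≤ r` with `u > 0`,
`∫₀ʳ (K_{t+u}(s) - K_t(s))² ds ≤ 4 |ln u|^{-1}`. -/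
theorem kernel_modulus_of_continuity (r : ℝ) (hr0 : 0 < r) (hr : r < Real.exp (-2))
    (t u : ℝ) (ht : 0 ≤ t) (hu : 0 < u) (htu : t + u ≤ r) :
    (∫⁻ s in Set.Ioc (0 : ℝ) r, ENNReal.ofReal ((Ker (t + u) s - Ker t s) ^ 2)) ≤
      ENNReal.ofReal (4 * |Real.log u|⁻¹) := by
  set F : ℝ → ℝ≥0∞ := fun s => ENNReal.ofReal ((Ker (t + u) s - Ker t s) ^ 2) with hF
  have he1 : Real.exp (-2 : ℝ) < 1 := by
    rw [Real.exp_lt_one_iff]; norm_num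
  have hr1 : r < 1 := hr.trans he1
  have htc : t ≤ t + u := by linarith
  have hur : u ≤ r := by linarith
  have hu1 : u < 1 := lt_of_le_of_lt hur hr1
  have hlogu : Real.log u < 0 := Real.log_neg hu hu1
  have hlogu2 : Real.log u < -2 := by
    calc Real.log u ≤ Real.log r := Real.log_le_log hu hur
    _ < Real.log (Real.exp (-2)) := Real.log_lt_log hr0 hr
    _ = -2 := Real.log_exp _
  have hkGu : 0 ≤ kG u := kG_nonneg hu hu1
  -- third piece vanishes
  have key3 : ∫⁻ s in Set.Ioc (t + u) r, F s = 0 := by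
    rw [← lintegral_zero (μ := volume.restrict (Set.Ioc (t+u) r))]
    apply setLIntegral_congr_fun measurableSet_Ioc
    intro s hs
    have h1 : ¬ s < t + u := not_lt.mpr hs.1.le
    have h2 : ¬ s < t := not_lt.mpr (le_trans htc hs.1.le)
    simp [hF, Ker, h1, h2]
  -- middle piece
  have key2 : ∫⁻ s in Set.Ioc t (t + u), F s ≤ ENNReal.ofReal (kG u) := by
    have hmono : ∀ s ∈ Set.Ioc t (t + u), F s ≤ ENNReal.ofReal (kg (t + u - s)) := by
      intro s hs
      have h2 : ¬ s < t := not_lt.mpr hs.1.le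
      have hKt : Ker t s = 0 := by simp [Ker, h2]
      rcases lt_or_ge s (t + u) with hlt | hge
      · simp only [hF, hKt, sub_zero, Ker_sq hlt]
        exact le_refl _
      · have hK2 : Ker (t + u) s = 0 := by simp [Ker, not_lt.mpr hge]
        simp only [hF, hKt, hK2, sub_zero, ne_eq, OfNat.ofNat_ne_zero, not_false_eq_true,
          zero_pow, ENNReal.ofReal_zero]
        exact zero_le
    refine le_trans (setLIntegral_mono' measurableSet_Ioc hmono) ?_
    have hcv := (Measure.measurePreserving_sub_left volume (t + u)).setLIntegral_comp_emb
      (MeasurableEquiv.subLeft (t + u)).measurableEmbedding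
      (fun v => ENNReal.ofReal (kg v)) (Set.Ioc t (t + u))
    rw [show (fun s => ENNReal.ofReal (kg (t + u - s))) = (fun s => (fun v => ENNReal.ofReal (kg v)) ((t+u) - s)) from rfl]
    rw [hcv, Set.image_const_sub_Ioc]
    simp only [sub_self, add_sub_cancel_left]
    rw [setLIntegral_congr Ico_ae_eq_Ioc]
    exact lintegral_kg_zero hu hu1
  -- first piece
  have key1 : ∫⁻ s in Set.Ioc 0 t, F s ≤ ENNReal.ofReal (3 * kG u) := by
    rcases eq_or_lt_of_le ht with rfl | ht0
    · rw [Set.Ioc_self]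
      simp
    · have ht1 : t < 1 := by linarith
      rw [setLIntegral_congr (Ioo_ae_eq_Ioc (μ := volume) (a := (0:ℝ)) (b := t)).symm]
      have hpt : ∀ s ∈ Set.Ioo (0:ℝ) t, F s ≤ ENNReal.ofReal (kg (t - s) - kg (t - s + u)) := by
        intro s hs
        have h1 : s < t := hs.2
        have h2 : s < t + u := by linarith
        have hx : 0 < t - s := by linarith
        have hky : t - s + u = t + u - s := by ring
        have ha2 : Ker t s ^ 2 = kg (t - s) := Ker_sq h1
        have hb2 : Ker (t+u) s ^ 2 = kg (t + u - s) := Ker_sq h2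
        have hsq : Ker (t+u) s ^ 2 ≤ Ker t s ^ 2 := by
          rw [ha2, hb2]
          exact kg_anti hx (by linarith) (by linarith [hs.1])
        have hba : Ker (t+u) s ≤ Ker t s := by
          nlinarith [Ker_nonneg (t+u) s, Ker_nonneg t s]
        simp only [hF]
        apply ENNReal.ofReal_le_ofReal
        rw [hky, ← ha2, ← hb2]
        nlinarith [Ker_nonneg (t+u) s, Ker_nonneg t s]
      refine le_trans (setLIntegral_mono' measurableSet_Ioo hpt) ?_
      have hcv := (Measure.measurePreserving_sub_left volume t).setLIntegral_comp_emb
        (MeasurableEquiv.subLeft t).measurableEmbedding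
        (fun v => ENNReal.ofReal (kg v - kg (v + u))) (Set.Ioo 0 t)
      rw [show (fun s => ENNReal.ofReal (kg (t - s) - kg (t - s + u)))
          = (fun s => (fun v => ENNReal.ofReal (kg v - kg (v + u))) (t - s)) from rfl]
      rw [hcv, Set.image_const_sub_Ioo]
      simp only [sub_self, sub_zero]
      rcases le_or_gt t u with htu2 | hut
      · have hb1 : ∀ v ∈ Set.Ioo (0:ℝ) t,
            ENNReal.ofReal (kg v - kg (v+u)) ≤ ENNReal.ofReal (kg v) := fun v hv =>
          ENNReal.ofReal_le_ofReal (by linarith [kg_nonneg (by linarith [hv.1] : (0:ℝ) ≤ v + u)])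
        refine le_trans (setLIntegral_mono' measurableSet_Ioo hb1) ?_
        refine le_trans (lintegral_mono_set Set.Ioo_subset_Ioc_self) ?_
        refine le_trans (lintegral_kg_zero ht0 ht1) ?_
        exact ENNReal.ofReal_le_ofReal (by linarith [kG_mono ht0 htu2 hu1])
      · have hsplit2 : Set.Ioo (0:ℝ) t = Set.Ioc 0 u ∪ Set.Ioo u t := by
          ext x
          simp only [Set.mem_Ioo, Set.mem_Ioc, Set.mem_union]
          constructor
          · rintro ⟨h1, h2⟩
            rcases le_or_gt x u with h | h
            · exact Or.inl ⟨h1, h⟩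
            · exact Or.inr ⟨h, h2⟩
          · rintro (⟨h1, h2⟩ | ⟨h1, h2⟩)
            · exact ⟨h1, lt_of_le_of_lt h2 hut⟩
            · exact ⟨lt_trans hu h1, h2⟩
        rw [hsplit2]
        refine le_trans (lintegral_union_le _ _ _) ?_
        have hpart1 : ∫⁻ v in Set.Ioc 0 u, ENNReal.ofReal (kg v - kg (v+u))
            ≤ ENNReal.ofReal (kG u) := by
          have hb2 : ∀ v ∈ Set.Ioc (0:ℝ) u,
              ENNReal.ofReal (kg v - kg (v+u)) ≤ ENNReal.ofReal (kg v) := fun v hv =>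
            ENNReal.ofReal_le_ofReal
              (by linarith [kg_nonneg (by linarith [hv.1] : (0:ℝ) ≤ v + u)])
          exact le_trans (setLIntegral_mono' measurableSet_Ioc hb2) (lintegral_kg_zero hu hu1)
        have hpart2 : ∫⁻ v in Set.Ioo u t, ENNReal.ofReal (kg v - kg (v+u))
            ≤ ENNReal.ofReal (2 * kG u) := by
          have hcont1 : ContinuousOn kg (Set.Icc u t) := continuousOn_kg hu ht1
          have hcont2 : ContinuousOn (fun v => kg (v + u)) (Set.Icc u t) := by
            intro x hx
            have h1 : ContinuousAt (fun v : ℝ => v + u) x :=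
              continuousAt_id.add continuousAt_const
            have hca : ContinuousAt (fun v : ℝ => kg (v + u)) x := by
              show ContinuousAt (kg ∘ fun v : ℝ => v + u) x
              apply ContinuousAt.comp _ h1
              exact continuousAt_kg (by linarith [hx.1] : (0:ℝ) < x + u)
                (by linarith [hx.2] : x + u < 1)
            exact hca.continuousWithinAt
          have hint : IntegrableOn (fun v => kg v - kg (v + u)) (Set.Ioo u t) :=
            ((hcont1.sub hcont2).integrableOn_Icc).mono_set Set.Ioo_subset_Icc_self
          have hnn : 0 ≤ᵐ[volume.restrict (Set.Ioo u t)] fun v => kg v - kg (v + u) := by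
            filter_upwards [ae_restrict_mem measurableSet_Ioo] with v hv
            have := kg_anti (show (0:ℝ) < v by linarith [hv.1]) (by linarith : v ≤ v + u)
              (by linarith [hv.2] : v + u < Real.exp (-2))
            simp only [Pi.zero_apply]
            linarith
          rw [← ofReal_integral_eq_lintegral_ofReal hint hnn]
          apply ENNReal.ofReal_le_ofReal
          have hIoo : ∫ v in Set.Ioo u t, (kg v - kg (v+u))
              = ∫ v in u..t, (kg v - kg (v + u)) := by
            rw [intervalIntegral.integral_of_le hut.le, ← integral_Ioc_eq_integral_Ioo]
          rw [hIoo]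
          have hii1 : IntervalIntegrable kg volume u t := by
            apply ContinuousOn.intervalIntegrable
            rw [Set.uIcc_of_le hut.le]
            exact hcont1
          have hii2 : IntervalIntegrable (fun v => kg (v + u)) volume u t := by
            apply ContinuousOn.intervalIntegrable
            rw [Set.uIcc_of_le hut.le]
            exact hcont2
          rw [intervalIntegral.integral_sub hii1 hii2, integral_kg hu hut.le ht1]
          have hcomp : ∫ v in u..t, kg (v + u) = ∫ v in (u+u)..(t+u), kg v :=
            intervalIntegral.integral_comp_add_right kg u
          rw [hcomp, integral_kg (by linarith : (0:ℝ) < u + u) (by linarith) (by linarith)]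
          have e1 : kG t ≤ kG (t+u) := kG_mono ht0 (by linarith) (by linarith)
          have e2 : kG (u+u) ≤ 2 * kG u := by
            rw [show u + u = 2 * u by ring]
            exact kG_two hu hlogu2
          linarith
        refine le_trans (add_le_add hpart1 hpart2) ?_
        rw [← ENNReal.ofReal_add hkGu (by linarith)]
        exact ENNReal.ofReal_le_ofReal (by linarith)
  have hsplit : Set.Ioc (0:ℝ) r = (Set.Ioc 0 t ∪ Set.Ioc t (t + u)) ∪ Set.Ioc (t + u) r := by
    rw [Set.Ioc_union_Ioc_eq_Ioc ht htc, Set.Ioc_union_Ioc_eq_Ioc (le_trans ht htc) htu]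
  calc ∫⁻ s in Set.Ioc (0:ℝ) r, F s
      ≤ ((∫⁻ s in Set.Ioc 0 t, F s) + ∫⁻ s in Set.Ioc t (t+u), F s) + ∫⁻ s in Set.Ioc (t+u) r, F s := by
        rw [hsplit]
        exact le_trans (lintegral_union_le _ _ _)
          (add_le_add (lintegral_union_le _ _ _) le_rfl)
    _ ≤ (ENNReal.ofReal (3 * kG u) + ENNReal.ofReal (kG u)) + 0 := by
        exact add_le_add (add_le_add key1 key2) (le_of_eq key3)
    _ = ENNReal.ofReal (4 * |Real.log u|⁻¹) := by
        rw [add_zero, ← ENNReal.ofReal_add (by linarith) hkGu]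
        congr 1
        rw [abs_of_neg hlogu, inv_neg]
        simp only [kG]
        ring
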